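/- In the graph G_k of the even-hole-free construction, the path Q from c₁ to b_k induced by the union of the connecting (c_i, b_{i-1})-paths for 2 ≤ i ≤ k together with the triangle vertices b_j, c_j for 1 ≤ j ≤ k is an isometric path of G_k of length k² + k - 1; moreover, for every i, the vertices b_i and c_i are at the same distance from r_k. -/

import Mathlib

open SimpleGraph

/-- Raw vertex names for the even-hole-free construction `G_k`:
`b i`, `c i` are triangle vertices of the `i`-th copy of `B_k` (0-indexed),
`p i j` (for `0 ≤ j ≤ k`) are the vertices of the pendant path of the `i`-th copy, with
`p i 0 = a_i` (the third triangle vertex) and `p i k = r_i`,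
`rp i j` (for `0 ≤ j ≤ k-2`) are the internal vertices of the length-`k` path joining
`r_i` and `r_{i+1}`, and
`cb i j` (for `0 ≤ j ≤ k-1`) are the internal vertices of the length-`(k+1)` path joining
`c_{i+1}` and `b_i`. -/
inductive Raw : Type
  | b : ℕ → Raw
  | c : ℕ → Raw
  | p : ℕ → ℕ → Raw
  | rp : ℕ → ℕ → Raw
  | cb : ℕ → ℕ → Raw
deriving DecidableEq

/-- Validity of a raw vertex name for the construction with parameter `k`. -/
def Valid (k : ℕ) : Raw → Prop
  | .b i => i < k
  | .c i => i < k
  | .p i j => i < k ∧ j ≤ k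
  | .rp i j => i + 1 < k ∧ j + 1 < k
  | .cb i j => i + 1 < k ∧ j < k

/-- The vertex set of `G_k`. -/
def Vk (k : ℕ) : Type := {x : Raw // Valid k x}

/-- The base adjacency relation of `G_k` on raw vertex names (to be symmetrized). -/
def GkRel (k : ℕ) : Raw → Raw → Prop := fun x y =>
  (∃ i, x = .p i 0 ∧ y = .b i) ∨
  (∃ i, x = .p i 0 ∧ y = .c i) ∨
  (∃ i, x = .b i ∧ y = .c i) ∨
  (∃ i j, x = .p i j ∧ y = .p i (j + 1)) ∨
  (∃ i, x = .p i k ∧ y = .rp i 0) ∨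
  (∃ i j, x = .rp i j ∧ y = .rp i (j + 1)) ∨
  (∃ i, x = .rp i (k - 2) ∧ y = .p (i + 1) k) ∨
  (∃ i, x = .c (i + 1) ∧ y = .cb i 0) ∨
  (∃ i j, x = .cb i j ∧ y = .cb i (j + 1)) ∨
  (∃ i, x = .cb i (k - 1) ∧ y = .b i)

/-- The graph `G_k` of the even-hole-free construction: `k` copies of `B_k` (a triangle
`a_i b_i c_i` with a pendant path of length `k` from `a_i` ending at `r_i`), with `r_i`
joined to `r_{i+1}` by a path of length `k` and `c_{i+1}` joined to `b_i` by a path of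
length `k + 1`. -/
def Gk (k : ℕ) : SimpleGraph (Vk k) :=
  SimpleGraph.fromRel (fun x y => GkRel k x.val y.val)

/-- A cycle is induced (a hole, if of length at least 4) if it has no chords: every edge
of the graph between vertices of the cycle is an edge of the cycle. -/
def IsInducedCycle {V : Type*} (G : SimpleGraph V) {v : V} (cyc : G.Walk v v) : Prop :=
  cyc.IsCycle ∧ ∀ x ∈ cyc.support, ∀ y ∈ cyc.support, G.Adj x y → s(x, y) ∈ cyc.edges

/-- A walk is an isometric path if it is a path and its length equals the distance
between its end-vertices. -/
def IsometricPath {V : Type*} (G : SimpleGraph V) {u v : V} (p : G.Walk u v) : Prop :=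
  p.IsPath ∧ p.length = G.dist u v

namespace GkAux

/-- in `G_k`, the path `Q` from `c₁` to `b_k` induced by the union of the
connecting `(c_{i+1}, b_i)`-paths together with the triangle vertices `b_j, c_j` (i.e.,
any path from `c₁` to `b_k` all of whose vertices are of the form `b`, `c` or `cb`) is an
isometric path of `G_k` of length `k² + k - 1`; moreover, for every `i`, the vertices
`b_i` and `c_i` are at the same distance from `r_k`. -/


def fQ (k : ℕ) : Raw → ℕ
  | .c i => i*(k+2)
  | .b i => i*(k+2)+1
  | .cb i j => i*(k+2)+1+(k-j)
  | .p i j => min (i*(k+2)+1+j) (i*k+2*k+1-j)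
  | .rp i j => i*k+k+j+2

def hQ (k : ℕ) : Raw → ℕ
  | .b i => (k-i)*k+1
  | .c i => (k-i)*k+1
  | .p i j => (k-1-i)*k + (k-j)
  | .rp i j => (k-2-i)*k + (k-1-j)
  | .cb i j => (k-1-i)*k + j + 2

lemma fQ_rel {k : ℕ} (hk : 4 ≤ k) {x y : Raw} (hx : Valid k x) (hy : Valid k y)
    (h : GkRel k x y) : fQ k x ≤ fQ k y + 1 ∧ fQ k y ≤ fQ k x + 1 := by
  simp only [GkRel] at h
  rcases h with ⟨i, rfl, rfl⟩|⟨i, rfl, rfl⟩|⟨i, rfl, rfl⟩|⟨i,j,rfl,rfl⟩|⟨i,rfl,rfl⟩|⟨i,j,rfl,rfl⟩|⟨i,rfl,rfl⟩|⟨i,rfl,rfl⟩|⟨i,j,rfl,rfl⟩|⟨i,rfl,rfl⟩ <;>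
    simp only [fQ, Valid] at hx hy ⊢
  · have e : i*(k+2) = i*k + 2*i := by ring
    omega
  · have e : i*(k+2) = i*k + 2*i := by ring
    omega
  · omega
  · have e : i*(k+2) = i*k + 2*i := by ring
    omega
  · have e : i*(k+2) = i*k + 2*i := by ring
    omega
  · omega
  · have e1 : (i+1)*(k+2) = i*k + 2*i + k + 2 := by ring
    have e2 : (i+1)*k = i*k + k := by ring
    omega
  · have e1 : (i+1)*(k+2) = i*(k+2) + k + 2 := by ring
    omega
  · omega
  · omega

lemma hQ_rel {k : ℕ} (hk : 4 ≤ k) {x y : Raw} (hx : Valid k x) (hy : Valid k y)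
    (h : GkRel k x y) : hQ k x ≤ hQ k y + 1 ∧ hQ k y ≤ hQ k x + 1 := by
  simp only [GkRel] at h
  rcases h with ⟨i, rfl, rfl⟩|⟨i, rfl, rfl⟩|⟨i, rfl, rfl⟩|⟨i,j,rfl,rfl⟩|⟨i,rfl,rfl⟩|⟨i,j,rfl,rfl⟩|⟨i,rfl,rfl⟩|⟨i,rfl,rfl⟩|⟨i,j,rfl,rfl⟩|⟨i,rfl,rfl⟩ <;>
    simp only [hQ, Valid] at hx hy ⊢
  · have e : (k-i)*k = (k-1-i)*k + k := by
      rw [show k - i = (k-1-i)+1 by omega]; ring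
    omega
  · have e : (k-i)*k = (k-1-i)*k + k := by
      rw [show k - i = (k-1-i)+1 by omega]; ring
    omega
  · omega
  · omega
  · have e : (k-1-i)*k = (k-2-i)*k + k := by
      rw [show k - 1 - i = (k-2-i)+1 by omega]; ring
    omega
  · omega
  · have e : k - 1 - (i+1) = k - 2 - i := by omega
    rw [e]
    omega
  · have e : k - (i+1) = k - 1 - i := by omega
    rw [e]
    omega
  · omega
  · have e : (k-i)*k = (k-1-i)*k + k := by
      rw [show k - i = (k-1-i)+1 by omega]; ring
    omega


def Qraw : Raw → Prop
  | .b _ => True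
  | .c _ => True
  | .cb _ _ => True
  | _ => False

lemma block_eq {k i i' r r' : ℕ} (h1 : r < k+2) (h2 : r' < k+2)
    (h : i*(k+2)+r = i'*(k+2)+r') : i = i' ∧ r = r' := by
  have e1 : (i*(k+2)+r)/(k+2) = i := by
    rw [add_comm, mul_comm, Nat.add_mul_div_left _ _ (by omega : 0 < k+2),
      Nat.div_eq_of_lt h1, zero_add]
  have e2 : (i'*(k+2)+r')/(k+2) = i' := by
    rw [add_comm, mul_comm, Nat.add_mul_div_left _ _ (by omega : 0 < k+2),
      Nat.div_eq_of_lt h2, zero_add]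
  have hii : i = i' := by rw [← e1, ← e2, h]
  subst hii
  exact ⟨rfl, by omega⟩

lemma fQ_inj {k : ℕ} (hk : 4 ≤ k) {x y : Raw} (hx : Valid k x) (hy : Valid k y)
    (qx : Qraw x) (qy : Qraw y) (h : fQ k x = fQ k y) : x = y := by
  cases x <;> cases y <;> simp only [Qraw] at qx qy <;> try exact absurd qx (by trivial)
  all_goals try exact absurd qy (by trivial)
  all_goals simp only [fQ, Valid] at h hx hy ⊢
  case b.b i i' =>
    obtain ⟨h1, h2⟩ := block_eq (k := k) (i := i) (i' := i') (r := 1) (r' := 1) (by omega) (by omega) (by omega)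
    simp [h1]
  case b.c i i' =>
    obtain ⟨h1, h2⟩ := block_eq (k := k) (i := i) (i' := i') (r := 1) (r' := 0) (by omega) (by omega) (by omega)
    omega
  case b.cb i i' j' =>
    obtain ⟨h1, h2⟩ := block_eq (k := k) (i := i) (i' := i') (r := 1) (r' := 1 + (k - j'))
      (by omega) (by omega) (by omega)
    omega
  case c.b i i' =>
    obtain ⟨h1, h2⟩ := block_eq (k := k) (i := i) (i' := i') (r := 0) (r' := 1) (by omega) (by omega) (by omega)
    omega
  case c.c i i' =>
    obtain ⟨h1, h2⟩ := block_eq (k := k) (i := i) (i' := i') (r := 0) (r' := 0) (by omega) (by omega) (by omega)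
    simp [h1]
  case c.cb i i' j' =>
    obtain ⟨h1, h2⟩ := block_eq (k := k) (i := i) (i' := i') (r := 0) (r' := 1 + (k - j'))
      (by omega) (by omega) (by omega)
    omega
  case cb.b i j i' =>
    obtain ⟨h1, h2⟩ := block_eq (k := k) (i := i) (i' := i') (r := 1 + (k - j)) (r' := 1)
      (by omega) (by omega) (by omega)
    omega
  case cb.c i j i' =>
    obtain ⟨h1, h2⟩ := block_eq (k := k) (i := i) (i' := i') (r := 1 + (k - j)) (r' := 0)
      (by omega) (by omega) (by omega)
    omega
  case cb.cb i j i' j' =>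
    obtain ⟨h1, h2⟩ := block_eq (k := k) (i := i) (i' := i') (r := 1 + (k - j)) (r' := 1 + (k - j'))
      (by omega) (by omega) (by omega)
    simp only [Raw.cb.injEq]
    omega

lemma step_rel {k : ℕ} (hk : 4 ≤ k) {x y : Raw} (hx : Valid k x) (hy : Valid k y)
    (qx : Qraw x) (qy : Qraw y) (h : GkRel k x y) :
    fQ k x = fQ k y + 1 ∨ fQ k y = fQ k x + 1 := by
  simp only [GkRel] at h
  rcases h with ⟨i, rfl, rfl⟩|⟨i, rfl, rfl⟩|⟨i, rfl, rfl⟩|⟨i,j,rfl,rfl⟩|⟨i,rfl,rfl⟩|⟨i,j,rfl,rfl⟩|⟨i,rfl,rfl⟩|⟨i,rfl,rfl⟩|⟨i,j,rfl,rfl⟩|⟨i,rfl,rfl⟩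
  · exact absurd qx (by simp [Qraw])
  · exact absurd qx (by simp [Qraw])
  · exact Or.inl (by simp [fQ])
  · exact absurd qx (by simp [Qraw])
  · exact absurd qx (by simp [Qraw])
  · exact absurd qx (by simp [Qraw])
  · exact absurd qx (by simp [Qraw])
  · simp only [fQ, Valid] at hx hy ⊢
    have e1 : (i+1)*(k+2) = i*(k+2) + k + 2 := by ring
    omega
  · simp only [fQ, Valid] at hx hy ⊢
    omega
  · simp only [fQ, Valid] at hx hy ⊢
    omega

lemma step_adj {k : ℕ} (hk : 4 ≤ k) {x y : Vk k} (h : (Gk k).Adj x y)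
    (qx : Qraw x.1) (qy : Qraw y.1) :
    fQ k x.1 = fQ k y.1 + 1 ∨ fQ k y.1 = fQ k x.1 + 1 := by
  rw [Gk, fromRel_adj] at h
  rcases h.2 with h'|h'
  · exact step_rel hk x.2 y.2 qx qy h'
  · exact (step_rel hk y.2 x.2 qy qx h').symm

lemma walk_mono {k : ℕ} (hk : 4 ≤ k) : ∀ {u v : Vk k} (q : (Gk k).Walk u v), q.IsPath →
    (∀ z ∈ q.support, Qraw z.1) →
    (∀ w ∈ q.support.tail, fQ k u.1 < fQ k w.1) →
    fQ k v.1 = fQ k u.1 + q.length := by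
  intro u v q
  induction q with
  | nil => simp
  | @cons u w v h p ih =>
    intro hp hsup hlt
    have qu : Qraw u.1 := hsup u (by simp)
    have qw : Qraw w.1 := hsup w (by simp)
    have hwt : w ∈ (Walk.cons h p).support.tail := by
      rw [Walk.support_cons]
      exact Walk.start_mem_support p
    have h1 : fQ k u.1 < fQ k w.1 := hlt w hwt
    have h2 : fQ k w.1 = fQ k u.1 + 1 := by
      rcases step_adj hk h qu qw with h'|h' <;> omega
    have hnodup : p.support.Nodup := hp.of_cons.support_nodup
    have ihres := ih hp.of_cons
      (fun z hz => hsup z (by rw [Walk.support_cons]; exact List.mem_cons_of_mem _ hz))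
      (fun x hx => by
        have hxs : x ∈ p.support := List.mem_of_mem_tail hx
        have h3 : fQ k u.1 < fQ k x.1 := hlt x (by rw [Walk.support_cons]; exact hxs)
        have hxq : Qraw x.1 := hsup x (by rw [Walk.support_cons]; exact List.mem_cons_of_mem _ hxs)
        rcases Nat.lt_or_ge (fQ k w.1) (fQ k x.1) with h4|h4
        · exact h4
        · exfalso
          have : fQ k x.1 = fQ k w.1 := by omega
          have hxw : x = w := Subtype.ext (fQ_inj hk x.2 w.2 hxq qw this)
          subst hxw
          rw [Walk.support_eq_cons] at hnodup
          exact (List.nodup_cons.mp hnodup).1 hx)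
    rw [Walk.length_cons]
    omega

lemma gk_adj {k : ℕ} {x y : Vk k} (hne : x.1 ≠ y.1) (h : GkRel k x.1 y.1) :
    (Gk k).Adj x y := by
  rw [Gk, fromRel_adj]
  exact ⟨fun e => hne (congrArg Subtype.val e), Or.inl h⟩

lemma walk_pUp {k : ℕ} (i : ℕ) (hi : i < k) : ∀ n j, (hjn : j + n ≤ k) →
    ∃ w : (Gk k).Walk ⟨.p i j, ⟨hi, by omega⟩⟩ ⟨.p i (j+n), ⟨hi, hjn⟩⟩, w.length = n := by
  intro n
  induction n with
  | zero => exact fun j h => ⟨Walk.nil, rfl⟩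
  | succ n ih =>
    intro j h
    obtain ⟨w, hw⟩ := ih j (by omega)
    refine ⟨w.concat (gk_adj (by simp) ?_), (Walk.length_concat _ _).trans (by omega)⟩
    exact Or.inr (Or.inr (Or.inr (Or.inl ⟨i, j+n, rfl, rfl⟩)))

lemma walk_rpSeg {k : ℕ} (hk : 4 ≤ k) (m : ℕ) (hm : m+1 < k) : ∀ j, (hj : j + 1 < k) →
    ∃ w : (Gk k).Walk ⟨.rp m j, ⟨hm, hj⟩⟩ ⟨.p m k, ⟨by omega, le_rfl⟩⟩, w.length = j + 1 := by
  intro j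
  induction j with
  | zero =>
    intro hj
    refine ⟨Walk.cons ((gk_adj (by simp) ?_).symm) Walk.nil, (Walk.length_cons _ _).trans (congrArg (· + 1) Walk.length_nil)⟩
    exact Or.inr (Or.inr (Or.inr (Or.inr (Or.inl ⟨m, rfl, rfl⟩))))
  | succ j ih =>
    intro hj
    obtain ⟨w, hw⟩ := ih (by omega)
    refine ⟨Walk.cons ((gk_adj (by simp) ?_).symm) w, (Walk.length_cons _ _).trans (by omega)⟩
    exact Or.inr (Or.inr (Or.inr (Or.inr (Or.inr (Or.inl ⟨m, j, rfl, rfl⟩)))))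

lemma walk_r {k : ℕ} (hk : 4 ≤ k) (m : ℕ) (hm : m + 1 < k) :
    ∃ w : (Gk k).Walk ⟨.p (m+1) k, ⟨hm, le_rfl⟩⟩ ⟨.p m k, ⟨by omega, le_rfl⟩⟩,
      w.length = k := by
  obtain ⟨w, hw⟩ := walk_rpSeg hk m hm (k-2) (by omega)
  refine ⟨Walk.cons ((gk_adj (by simp) ?_).symm) w, (Walk.length_cons _ _).trans (by omega)⟩
  exact Or.inr (Or.inr (Or.inr (Or.inr (Or.inr (Or.inr (Or.inl ⟨m, rfl, rfl⟩))))))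

lemma walk_spine {k : ℕ} (hk : 4 ≤ k) : ∀ t, t ≤ k-1 →
    ∃ w : (Gk k).Walk ⟨.p (k-1) k, ⟨by omega, le_rfl⟩⟩ ⟨.p (k-1-t) k, ⟨by omega, le_rfl⟩⟩,
      w.length = t * k := by
  intro t
  induction t with
  | zero => exact fun _ => ⟨Walk.nil, (Nat.zero_mul k).symm⟩
  | succ t ih =>
    intro ht
    obtain ⟨w1, h1⟩ := ih (by omega)
    obtain ⟨w2, h2⟩ := walk_r hk (k-1-(t+1)) (by omega)
    have e : Raw.p (k-1-(t+1)+1) k = Raw.p (k-1-t) k := by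
      rw [show k-1-(t+1)+1 = k-1-t by omega]
    refine ⟨w1.append (w2.copy (Subtype.ext e) rfl), ?_⟩
    refine (Walk.length_append _ _).trans ((congrArg (w1.length + ·) (Walk.length_copy _ _ _)).trans ?_)
    show w1.length + w2.length = (t + 1) * k
    have e3 : (t + 1) * k = t * k + k := by ring
    omega

lemma walk_to_b {k : ℕ} (hk : 4 ≤ k) (i : ℕ) (hi : i < k) :
    ∃ w : (Gk k).Walk ⟨.p (k-1) k, ⟨by omega, le_rfl⟩⟩ ⟨.b i, hi⟩,
      w.length = (k-i)*k + 1 := by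
  obtain ⟨w1, h1⟩ := walk_spine hk (k-1-i) (by omega)
  obtain ⟨w2, h2⟩ := walk_pUp i hi k 0 (by omega)
  have e1 : Raw.p (k-1-(k-1-i)) k = Raw.p i k := by
    rw [show k-1-(k-1-i) = i by omega]
  have e2 : Raw.p i (0+k) = Raw.p i k := by rw [Nat.zero_add]
  refine ⟨((w1.copy rfl (Subtype.ext e1) :
      (Gk k).Walk ⟨.p (k-1) k, ⟨by omega, le_rfl⟩⟩ ⟨.p i k, ⟨hi, le_rfl⟩⟩).append
    (w2.reverse.copy (Subtype.ext e2) rfl :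
      (Gk k).Walk ⟨.p i k, ⟨hi, le_rfl⟩⟩ ⟨.p i 0, ⟨hi, by omega⟩⟩)).concat
    (gk_adj (by simp) (Or.inl ⟨i, rfl, rfl⟩)), ?_⟩
  refine (Walk.length_concat _ _).trans ((congrArg (· + 1) ((Walk.length_append _ _).trans (congrArg₂ (· + ·) ((Walk.length_copy _ _ _).trans h1) ((Walk.length_copy _ _ _).trans ((Walk.length_reverse _).trans h2))))).trans ?_)
  show (k-1-i)*k + k + 1 = (k-i)*k + 1
  have e : (k-i)*k = (k-1-i)*k + k := by
    rw [show k - i = (k-1-i)+1 by omega]; ring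
  omega

lemma walk_to_c {k : ℕ} (hk : 4 ≤ k) (i : ℕ) (hi : i < k) :
    ∃ w : (Gk k).Walk ⟨.p (k-1) k, ⟨by omega, le_rfl⟩⟩ ⟨.c i, hi⟩,
      w.length = (k-i)*k + 1 := by
  obtain ⟨w1, h1⟩ := walk_spine hk (k-1-i) (by omega)
  obtain ⟨w2, h2⟩ := walk_pUp i hi k 0 (by omega)
  have e1 : Raw.p (k-1-(k-1-i)) k = Raw.p i k := by
    rw [show k-1-(k-1-i) = i by omega]
  have e2 : Raw.p i (0+k) = Raw.p i k := by rw [Nat.zero_add]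
  refine ⟨((w1.copy rfl (Subtype.ext e1) :
      (Gk k).Walk ⟨.p (k-1) k, ⟨by omega, le_rfl⟩⟩ ⟨.p i k, ⟨hi, le_rfl⟩⟩).append
    (w2.reverse.copy (Subtype.ext e2) rfl :
      (Gk k).Walk ⟨.p i k, ⟨hi, le_rfl⟩⟩ ⟨.p i 0, ⟨hi, by omega⟩⟩)).concat
    (gk_adj (by simp) (Or.inr (Or.inl ⟨i, rfl, rfl⟩))), ?_⟩
  refine (Walk.length_concat _ _).trans ((congrArg (· + 1) ((Walk.length_append _ _).trans (congrArg₂ (· + ·) ((Walk.length_copy _ _ _).trans h1) ((Walk.length_copy _ _ _).trans ((Walk.length_reverse _).trans h2))))).trans ?_)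
  show (k-1-i)*k + k + 1 = (k-i)*k + 1
  have e : (k-i)*k = (k-1-i)*k + k := by
    rw [show k - i = (k-1-i)+1 by omega]; ring
  omega

section
variable {V : Type*} {G : SimpleGraph V}

lemma walk_bound (L : V → ℕ) (hL : ∀ {x y}, G.Adj x y → L y ≤ L x + 1) :
    ∀ {u v : V} (w : G.Walk u v), L v ≤ L u + w.length := by
  intro u v w
  induction w with
  | nil => simp
  | cons h p ih =>
    simp only [Walk.length_cons]
    have := hL h
    omega

lemma dist_bound (L : V → ℕ) (hL : ∀ {x y}, G.Adj x y → L y ≤ L x + 1)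
    {u v : V} (w : G.Walk u v) : L v ≤ L u + G.dist u v := by
  obtain ⟨p, hp⟩ := Reachable.exists_walk_length_eq_dist ⟨w⟩
  rw [← hp]
  exact walk_bound L hL p

end

lemma lip_adj {k : ℕ} (L : Raw → ℕ)
    (hrel : ∀ {x y : Raw}, Valid k x → Valid k y → GkRel k x y → L x ≤ L y + 1 ∧ L y ≤ L x + 1)
    {x y : Vk k} (h : (Gk k).Adj x y) : L y.1 ≤ L x.1 + 1 := by
  rw [Gk, fromRel_adj] at h
  rcases h.2 with h'|h'
  · exact (hrel x.2 y.2 h').2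
  · exact (hrel y.2 x.2 h').1


end GkAux

open GkAux in
/-- main theorem -/
theorem Gk_special_path (k : ℕ) (hk : 4 ≤ k) :
    (∀ (a b : Vk k), a.val = Raw.c 0 → b.val = Raw.b (k - 1) →
      ∀ (q : (Gk k).Walk a b), q.IsPath →
        (∀ x ∈ q.support, (∃ i, Subtype.val x = Raw.b i) ∨
          (∃ i, Subtype.val x = Raw.c i) ∨ (∃ i j, Subtype.val x = Raw.cb i j)) →
        IsometricPath (Gk k) q ∧ q.length = k ^ 2 + k - 1) ∧
    (∀ (i : ℕ), i < k → ∀ (rk bi ci : Vk k),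
      rk.val = Raw.p (k - 1) k → bi.val = Raw.b i → ci.val = Raw.c i →
      (Gk k).dist rk bi = (Gk k).dist rk ci) := by
  have hNN : (k-1)*(k+2)+1 = k ^ 2 + k - 1 := by
    obtain ⟨m, rfl⟩ : ∃ m, k = m + 4 := ⟨k - 4, by omega⟩
    have e1 : (m+4)^2 = m*m+8*m+16 := by ring
    have e2 : (m+4-1)*(m+4+2) = m*m+9*m+18 := by show (m+3)*(m+6) = _; ring
    omega
  constructor
  · rintro a b ha hb q hq hsup
    have qsup : ∀ z ∈ q.support, Qraw z.1 := by
      intro z hz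
      rcases hsup z hz with ⟨i,h⟩|⟨i,h⟩|⟨i,j,h⟩ <;> rw [h] <;> trivial
    have hfa : fQ k a.1 = 0 := by rw [ha]; simp [fQ]
    have hfb : fQ k b.1 = (k-1)*(k+2)+1 := by rw [hb]; simp [fQ]
    have hlen : q.length = (k-1)*(k+2)+1 := by
      have hmono := walk_mono hk q hq qsup ?_
      · omega
      · intro w hw
        have hws : w ∈ q.support := List.mem_of_mem_tail hw
        have hwQ : Qraw w.1 := qsup w hws
        rw [hfa]
        rcases Nat.eq_zero_or_pos (fQ k w.1) with h0|h0
        swap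
        · exact h0
        exfalso
        have hwa : w = a := by
          apply Subtype.ext
          apply fQ_inj hk w.2 a.2 hwQ (by rw [ha]; trivial)
          rw [hfa, h0]
        subst hwa
        have := hq.support_nodup
        rw [Walk.support_eq_cons] at this
        exact (List.nodup_cons.mp this).1 hw
    have hdle : (Gk k).dist a b ≤ q.length := SimpleGraph.dist_le q
    have hdge : (k-1)*(k+2)+1 ≤ (Gk k).dist a b := by
      have := dist_bound (fun z : Vk k => fQ k z.1)
        (fun h => lip_adj (fQ k) (fun hx hy hr => fQ_rel hk hx hy hr) h) q
      omega
    exact ⟨⟨hq, by omega⟩, by omega⟩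
  · rintro i hi rk bi ci hrk hbi hci
    have hrk' : rk = ⟨Raw.p (k-1) k, ⟨by omega, le_rfl⟩⟩ := Subtype.ext hrk
    have hbi' : bi = ⟨Raw.b i, hi⟩ := Subtype.ext hbi
    have hci' : ci = ⟨Raw.c i, hi⟩ := Subtype.ext hci
    subst hrk' hbi' hci'
    obtain ⟨wb, hwb⟩ := walk_to_b hk i hi
    obtain ⟨wc, hwc⟩ := walk_to_c hk i hi
    have hub : (Gk k).dist _ _ ≤ (k-i)*k+1 := hwb ▸ SimpleGraph.dist_le wb
    have huc : (Gk k).dist _ _ ≤ (k-i)*k+1 := hwc ▸ SimpleGraph.dist_le wc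
    have hlb := dist_bound (fun z : Vk k => hQ k z.1)
      (fun h => lip_adj (hQ k) (fun hx hy hr => hQ_rel hk hx hy hr) h) wb
    have hlc := dist_bound (fun z : Vk k => hQ k z.1)
      (fun h => lip_adj (hQ k) (fun hx hy hr => hQ_rel hk hx hy hr) h) wc
    simp only [hQ] at hlb hlc
    rw [Nat.sub_self, Nat.sub_self, Nat.zero_mul, Nat.zero_add] at hlb hlc
    omega
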